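/- Let (X_n)_{n≥0} be independent, identically distributed nonnegative real random variables, and suppose there exists β > 0 with E[X_0^β] < 1. Then the running products converge to zero almost surely: ∏_{l=0}^{n−1} X_l → 0 as n → ∞, almost surely. -/

import Mathlib

open MeasureTheory ProbabilityTheory Filter Topology

noncomputable section

/-- If `(X_n)` are i.i.d. nonnegative real random variables and
`E[X_0^β] < 1` for some `β > 0` (the `β`-th moment being finite), then the running
products `∏_{l=0}^{n−1} X_l` converge to zero almost surely. -/
theorem iid_products_tendsto_zero
    {Ω : Type*} [MeasurableSpace Ω] (P : Measure Ω) [IsProbabilityMeasure P]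
    (X : ℕ → Ω → ℝ) (hXmeas : ∀ n, Measurable (X n))
    (hXnonneg : ∀ n ω, 0 ≤ X n ω)
    (hindep : iIndepFun X P)
    (hident : ∀ n, Measure.map (X n) P = Measure.map (X 0) P)
    (β : ℝ) (hβ : 0 < β)
    (hint : Integrable (fun ω => X 0 ω ^ β) P)
    (hmom : ∫ ω, X 0 ω ^ β ∂P < 1) :
    ∀ᵐ ω ∂P, Tendsto (fun n => ∏ l ∈ Finset.range n, X l ω) atTop (nhds 0) := by
  set Y : ℕ → Ω → ℝ := fun n ω => X n ω ^ β with hY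
  have hf : Measurable fun x : ℝ => x ^ β := measurable_id.pow_const β
  have hYindep : Pairwise (Function.onFun (IndepFun · · P) Y) := by
    intro i j hij
    exact (hindep.indepFun hij).comp hf hf
  have hYident : ∀ n, IdentDistrib (Y n) (Y 0) P P := by
    intro n
    have h0 : IdentDistrib (X n) (X 0) P P :=
      ⟨(hXmeas n).aemeasurable, (hXmeas 0).aemeasurable, hident n⟩
    exact h0.comp hf
  have hSLLN := strong_law_ae_real Y hint hYindep hYident
  filter_upwards [hSLLN] with ω hω
  set m := ∫ ω, X 0 ω ^ β ∂P with hm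
  have hm0 : 0 ≤ m := integral_nonneg fun ω => Real.rpow_nonneg (hXnonneg 0 ω) β
  set c : ℝ := (m + 1) / 2 with hc
  have hmc : m < c := by simp only [hc]; linarith
  have hc0 : 0 ≤ c := by simp only [hc]; linarith
  have hc1 : c < 1 := by simp only [hc]; linarith
  -- eventually the average is below c
  have hev : ∀ᶠ n in atTop, (∑ i ∈ Finset.range n, Y i ω) / n < c :=
    hω.eventually_lt_const hmc
  -- product of Y is eventually ≤ c^n
  have hprodY : ∀ᶠ n in atTop, (∏ l ∈ Finset.range n, Y l ω) ≤ c ^ n := by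
    filter_upwards [hev, eventually_ge_atTop 1] with n hn hn1
    have hnpos : (0 : ℝ) < n := by exact_mod_cast hn1
    have hAM := Real.geom_mean_le_arith_mean_weighted (Finset.range n)
      (fun _ => (n : ℝ)⁻¹) (fun l => Y l ω)
      (fun _ _ => by positivity)
      (by simp [Finset.sum_const, mul_inv_cancel₀ hnpos.ne'])
      (fun l _ => Real.rpow_nonneg (hXnonneg l ω) β)
    have hYnn : ∀ l ∈ Finset.range n, 0 ≤ Y l ω :=
      fun l _ => Real.rpow_nonneg (hXnonneg l ω) β
    rw [Real.finset_prod_rpow _ _ hYnn] at hAM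
    have hA : (∑ i ∈ Finset.range n, (n:ℝ)⁻¹ * Y i ω)
        = (∑ i ∈ Finset.range n, Y i ω) / n := by
      rw [← Finset.mul_sum]; ring
    rw [hA] at hAM
    have hAc : (∏ l ∈ Finset.range n, Y l ω) ^ ((n:ℝ)⁻¹) ≤ c := hAM.trans hn.le
    have hPnn : 0 ≤ ∏ l ∈ Finset.range n, Y l ω := Finset.prod_nonneg hYnn
    calc ∏ l ∈ Finset.range n, Y l ω
        = ((∏ l ∈ Finset.range n, Y l ω) ^ ((n:ℝ)⁻¹)) ^ n := by
          rw [← Real.rpow_natCast ((∏ l ∈ Finset.range n, Y l ω) ^ ((n:ℝ)⁻¹)) n,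
            ← Real.rpow_mul hPnn, inv_mul_cancel₀ hnpos.ne', Real.rpow_one]
      _ ≤ c ^ n := pow_le_pow_left₀ (Real.rpow_nonneg hPnn _) hAc n
  have hYtendsto : Tendsto (fun n => ∏ l ∈ Finset.range n, Y l ω) atTop (nhds 0) := by
    apply tendsto_of_tendsto_of_tendsto_of_le_of_le' tendsto_const_nhds
      (tendsto_pow_atTop_nhds_zero_of_lt_one hc0 hc1)
    · exact Eventually.of_forall fun n =>
        Finset.prod_nonneg fun l _ => Real.rpow_nonneg (hXnonneg l ω) β
    · exact hprodY
  -- now X-product = (Y-product)^(1/β)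
  have hrw : (fun n => ∏ l ∈ Finset.range n, X l ω)
      = fun n => (∏ l ∈ Finset.range n, Y l ω) ^ (β⁻¹) := by
    funext n
    rw [← Real.finset_prod_rpow _ _ (fun l _ => Real.rpow_nonneg (hXnonneg l ω) β)]
    refine (Finset.prod_congr rfl fun l _ => ?_).symm
    rw [← Real.rpow_mul (hXnonneg l ω), mul_inv_cancel₀ hβ.ne', Real.rpow_one]
  rw [hrw]
  have := hYtendsto.rpow_const (p := β⁻¹) (Or.inr (inv_nonneg.2 hβ.le))
  rwa [Real.zero_rpow (inv_ne_zero hβ.ne')] at this
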